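/- For all positive integers n, the largest integer p such that (1-T)^p · ∑_{k≥1} C(n+k-1,k) T^k has all nonnegative coefficients equals ⌈n/2⌉. -/

import Mathlib

open PowerSeries

lemma coeff_one_sub_pow (p k : ℕ) :
    (PowerSeries.coeff (R := ℤ) k) ((1 - PowerSeries.X) ^ p) = (-1)^k * (p.choose k : ℤ) := by
  induction p generalizing k with
  | zero =>
    cases k with
    | zero => simp
    | succ k => simp [Nat.choose_eq_zero_of_lt (Nat.succ_pos k)]
  | succ p ih =>
    rw [pow_succ, mul_sub, mul_one, map_sub]
    cases k with
    | zero => simp [ih 0]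
    | succ k =>
      rw [mul_comm _ X, PowerSeries.coeff_succ_X_mul, ih (k+1), ih k,
        Nat.choose_succ_succ]
      push_cast
      ring

lemma mk_eq_inv (n : ℕ) (hn : 0 < n) :
    (PowerSeries.mk fun j => if 1 ≤ j then ((n + j - 1).choose j : ℤ) else 0)
      = (invOneSubPow ℤ n).val - 1 := by
  rw [invOneSubPow_val_eq_mk_sub_one_add_choose_of_pos _ _ hn]
  ext j
  rw [map_sub, coeff_mk, coeff_mk]
  cases j with
  | zero => simp
  | succ j =>
    have h1 : n + (j+1) - 1 = (n - 1) + (j + 1) := by omega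
    rw [h1, Nat.choose_symm_add]
    simp

lemma key (n p d : ℕ) (h : p + d = n) (hn : 0 < n) :
    (1 - PowerSeries.X) ^ p *
        PowerSeries.mk (fun j => if 1 ≤ j then ((n + j - 1).choose j : ℤ) else 0)
      = (invOneSubPow ℤ d).val - (1 - PowerSeries.X) ^ p := by
  rw [mk_eq_inv n hn, mul_sub, mul_one]
  congr 1
  have hu : invOneSubPow ℤ n = invOneSubPow ℤ p * invOneSubPow ℤ d := by
    rw [invOneSubPow_eq_inv_one_sub_pow, invOneSubPow_eq_inv_one_sub_pow,
      invOneSubPow_eq_inv_one_sub_pow, ← pow_add, h]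
  rw [hu, Units.val_mul, ← mul_assoc]
  have : (1 - PowerSeries.X) ^ p * (invOneSubPow ℤ p).val = 1 := by
    rw [← invOneSubPow_inv_eq_one_sub_pow]
    exact (invOneSubPow ℤ p).inv_val
  rw [this, one_mul]

theorem stmt_19 (n : ℕ) (hn : 0 < n) :
    IsGreatest
      {p : ℕ | ∀ k : ℕ, 0 ≤ (PowerSeries.coeff (R := ℤ) k)
        ((1 - PowerSeries.X) ^ p *
          PowerSeries.mk fun j => if 1 ≤ j then ((n + j - 1).choose j : ℤ) else 0)}
      ((n + 1) / 2) := by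
  constructor
  · -- membership
    intro k
    set q := (n + 1) / 2 with hq
    set d := n / 2 with hd
    have hqd : q + d = n := by omega
    rw [key n q d hqd hn, map_sub, coeff_one_sub_pow]
    rcases Nat.eq_zero_or_pos d with h0 | hdpos
    · -- n = 1, q = 1
      have hn1 : n = 1 := by omega
      have hq1 : q = 1 := by omega
      rw [hq1]
      rw [h0, invOneSubPow_zero, Units.val_one]
      rcases k with _ | _ | k
      · simp
      · simp
      · rw [Nat.choose_eq_zero_of_lt (by omega)]
        simp [PowerSeries.coeff_one]
    · rw [invOneSubPow_val_eq_mk_sub_one_add_choose_of_pos _ _ hdpos, coeff_mk]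
      rcases Nat.even_or_odd k with he | ho
      · rw [he.neg_one_pow, one_mul, sub_nonneg, Int.ofNat_le]
        rcases Nat.eq_zero_or_pos k with hk0 | hkpos
        · subst hk0; simp
        · have hk2 : 2 ≤ k := by
            rcases he with ⟨m, hm⟩; omega
          have hle : q ≤ d - 1 + k := by omega
          calc q.choose k ≤ (d - 1 + k).choose k := Nat.choose_le_choose k hle
            _ = (d - 1 + k).choose (d - 1) := (Nat.choose_symm_add).symm
      · rw [ho.neg_one_pow]
        have : (0:ℤ) ≤ (((d - 1 + k).choose (d - 1) : ℕ) : ℤ) + (q.choose k : ℤ) := by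
          positivity
        linarith
  · -- upper bound
    intro p hp
    have h2 := hp 2
    rw [PowerSeries.coeff_mul, Finset.Nat.sum_antidiagonal_eq_sum_range_succ_mk] at h2
    simp only [Finset.sum_range_succ, Finset.sum_range_zero, zero_add, coeff_mk,
      coeff_one_sub_pow] at h2
    norm_num at h2
    have h3 : p * n ≤ (n + 1).choose 2 := by exact_mod_cast h2
    have h4 : (n + 1).choose 2 * 2 = (n + 1) * n := by
      rw [Nat.choose_two_right, Nat.add_sub_cancel, Nat.div_mul_cancel]
      exact (mul_comm n (n+1)) ▸ (Nat.even_mul_succ_self n).two_dvd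
    have h5 : 2 * p * n ≤ (n + 1) * n := by nlinarith
    have h6 : 2 * p ≤ n + 1 := Nat.le_of_mul_le_mul_right (by linarith) hn
    omega
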